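/- For any positive semidefinite Hermitian n×n complex matrix A, the immanant Imm_{χ^λ}(A) is a nonnegative real number for every partition λ of n. -/

import Mathlib

open scoped ComplexOrder

/-- The λ-immanant of a complex `m × m` matrix with respect to a class function `χ`. -/
noncomputable def immanant {m : ℕ} (χ : Equiv.Perm (Fin m) → ℂ)
    (B : Matrix (Fin m) (Fin m) ℂ) : ℂ :=
  ∑ σ : Equiv.Perm (Fin m), χ σ * ∏ i, B (σ i) i

open Matrix CategoryTheory

open Matrix in
theorem key_nonneg {ι κ₁ κ₂ : Type*} [Fintype ι] [Fintype κ₁] [Fintype κ₂]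
    (P : Matrix κ₁ ι ℂ) (N : Matrix κ₂ ι ℂ) :
    0 ≤ ∑ σ : ι, ∑ τ : ι, (Pᴴ * P) σ τ * (Nᴴ * N) σ τ := by
  have e0 : ∑ σ : ι, ∑ τ : ι, (Pᴴ * P) σ τ * (Nᴴ * N) σ τ
      = Matrix.trace ((Pᴴ * P)ᵀ * (Nᴴ * N)) := by
    simp only [Matrix.trace, Matrix.diag_apply, Matrix.mul_apply, Matrix.transpose_apply]
    rw [Finset.sum_comm]
  have e1 : (Pᴴ * P)ᵀ * (Nᴴ * N) = Pᵀ * (((Pᴴ)ᵀ * Nᴴ) * N) := by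
    rw [Matrix.transpose_mul]; simp only [Matrix.mul_assoc]
  have e2 : (((Pᴴ)ᵀ * Nᴴ) * N) * Pᵀ = ((Pᴴ)ᵀ * Nᴴ) * ((Pᴴ)ᵀ * Nᴴ)ᴴ := by
    simp only [Matrix.conjTranspose_mul, Matrix.conjTranspose_conjTranspose]
    have : (Pᴴᵀ)ᴴ = Pᵀ := by ext i j; simp
    rw [this]; simp only [Matrix.mul_assoc]
  rw [e0, e1, Matrix.trace_mul_comm, e2]
  apply Finset.sum_nonneg; intro a _
  simp only [Matrix.diag_apply, Matrix.mul_apply, Matrix.conjTranspose_apply]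
  exact Finset.sum_nonneg fun c _ => mul_star_self_nonneg _

open scoped MatrixOrder in
theorem char_inv_star {G : Type} [Group G] [Fintype G] (V : FDRep ℂ G) (g : G) :
    V.character g⁻¹ = star (V.character g) := by
  classical
  let b := Module.finBasis ℂ V
  set R : G → Matrix _ _ ℂ := fun g => LinearMap.toMatrix b b (V.ρ g) with hR
  have hRmul : ∀ g h : G, R (g * h) = R g * R h := by
    intro g h
    show LinearMap.toMatrix b b (V.ρ (g*h)) = _
    rw [_root_.map_mul]
    exact LinearMap.toMatrix_mul b _ _
  have hR1 : R 1 = 1 := by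
    show LinearMap.toMatrix b b (V.ρ 1) = _
    rw [_root_.map_one]
    exact LinearMap.toMatrix_one b
  have hchar : ∀ g : G, V.character g = (R g).trace := fun g =>
    LinearMap.trace_eq_matrix_trace ℂ b _
  set H : Matrix _ _ ℂ := ∑ h : G, (R h)ᴴ * R h with hHdef
  have hHinv : ∀ g : G, (R g)ᴴ * H * R g = H := by
    intro g
    have : (R g)ᴴ * H * R g = ∑ h : G, (R (h * g))ᴴ * R (h * g) := by
      rw [hHdef, Finset.mul_sum, Finset.sum_mul]
      refine Finset.sum_congr rfl fun h _ => ?_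
      rw [hRmul, Matrix.conjTranspose_mul]
      simp only [Matrix.mul_assoc]
    rw [this, hHdef]
    exact Fintype.sum_equiv (Equiv.mulRight g) _ _ fun h => rfl
  have hH : H.PosDef := by
    have : H = (R 1)ᴴ * R 1 + ∑ h ∈ Finset.univ.erase 1, (R h)ᴴ * R h :=
      (Finset.add_sum_erase _ _ (Finset.mem_univ 1)).symm
    rw [this, hR1]
    simp only [Matrix.conjTranspose_one, Matrix.one_mul]
    refine Matrix.PosDef.add_posSemidef Matrix.PosDef.one ?_
    refine Finset.sum_induction _ _ (fun a b ha hb => ha.add hb) Matrix.PosSemidef.zero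
      fun h _ => Matrix.posSemidef_conjTranspose_mul_self _
  set P := CFC.sqrt H with hPdef
  have hPH : P.IsHermitian := (CFC.sqrt_nonneg H).posSemidef.isHermitian
  have hP2 : P * P = H := CFC.sqrt_mul_sqrt_self H hH.posSemidef.nonneg
  have hPunit : IsUnit P.det := by
    have h1 : P.det * P.det = H.det := by rw [← Matrix.det_mul, hP2]
    have h2 : H.det ≠ 0 := hH.det_pos.ne'
    exact (mul_ne_zero_iff.mp (h1 ▸ h2)).1.isUnit
  have hPinvP : P⁻¹ * P = 1 := Matrix.nonsing_inv_mul _ hPunit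
  have hPPinv : P * P⁻¹ = 1 := Matrix.mul_nonsing_inv _ hPunit
  have hPinvH : (P⁻¹)ᴴ = P⁻¹ := by rw [Matrix.conjTranspose_nonsing_inv, hPH.eq]
  set U : G → Matrix _ _ ℂ := fun g => P * R g * P⁻¹ with hUdef
  have hUunit : ∀ g : G, (U g)ᴴ * U g = 1 := by
    intro g
    have : (U g)ᴴ * U g = P⁻¹ * ((R g)ᴴ * H * R g) * P⁻¹ := by
      simp only [hUdef, Matrix.conjTranspose_mul, hPinvH, hPH.eq, ← hP2]
      simp only [Matrix.mul_assoc]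
    rw [this, hHinv, ← hP2]
    calc P⁻¹ * (P * P) * P⁻¹ = (P⁻¹ * P) * (P * P⁻¹) := by simp only [Matrix.mul_assoc]
    _ = 1 := by rw [hPinvP, hPPinv, Matrix.one_mul]
  have hUtr : ∀ g : G, (U g).trace = (R g).trace := by
    intro g
    rw [hUdef]
    calc (P * R g * P⁻¹).trace = (P⁻¹ * (P * R g)).trace := Matrix.trace_mul_comm _ _
    _ = ((P⁻¹ * P) * R g).trace := by rw [Matrix.mul_assoc]
    _ = (R g).trace := by rw [hPinvP, Matrix.one_mul]
  have hUmulinv : ∀ g : G, U g⁻¹ * U g = 1 := by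
    intro g
    calc U g⁻¹ * U g = P * R g⁻¹ * (P⁻¹ * P) * R g * P⁻¹ := by
          simp only [hUdef, Matrix.mul_assoc]
    _ = P * (R g⁻¹ * R g) * P⁻¹ := by rw [hPinvP]; simp only [Matrix.mul_one, Matrix.mul_assoc]
    _ = 1 := by rw [← hRmul, inv_mul_cancel, hR1, Matrix.mul_one, hPPinv]
  have key : U g⁻¹ = (U g)ᴴ := by
    rw [← Matrix.inv_eq_left_inv (hUmulinv g), Matrix.inv_eq_left_inv (hUunit g)]
  rw [hchar, ← hUtr, key, Matrix.trace_conjTranspose, hUtr, ← hchar]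

open CategoryTheory

theorem schur_conv {G : Type} [Group G] [Fintype G] (V : FDRep ℂ G)
    (hV : CategoryTheory.Simple V) :
    ∃ μ : ℂ, ∀ x : G, ∑ g : G, V.character g * V.character (g⁻¹ * x) = μ * V.character x := by
  classical
  set Φ : (V →ₗ[ℂ] V) := ∑ g : G, V.character g • (V.ρ g⁻¹) with hΦdef
  have hcomm : ∀ h : G, Φ * V.ρ h = V.ρ h * Φ := by
    intro h
    rw [hΦdef, Finset.sum_mul, Finset.mul_sum]
    refine Fintype.sum_equiv (MulAut.conj h⁻¹).toEquiv _ _ fun g => ?_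
    simp only [smul_mul_assoc, mul_smul_comm]
    show V.character g • (V.ρ g⁻¹ * V.ρ h) =
      V.character (h⁻¹ * g * (h⁻¹)⁻¹) • (V.ρ h * V.ρ (h⁻¹ * g * (h⁻¹)⁻¹)⁻¹)
    rw [FDRep.char_conj, ← _root_.map_mul, ← _root_.map_mul]
    congr 2
    group
  let f : V ⟶ V := ⟨FGModuleCat.ofHom Φ, fun h => by ext v; exact LinearMap.congr_fun (hcomm h) v⟩
  have h1 : Module.finrank ℂ (V ⟶ V) = 1 := by
    rw [FDRep.finrank_hom_simple_simple V V, if_pos ⟨Iso.refl V⟩]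
  obtain ⟨μ, hμ⟩ := (finrank_eq_one_iff_of_nonzero' (𝟙 V) (id_nonzero V)).mp h1 f
  have hΦ : Φ = μ • (1 : V →ₗ[ℂ] V) := by
    have := congrArg Action.Hom.hom hμ
    simp only [Action.smul_hom] at this
    have := congrArg (fun φ => φ.hom.hom) this
    exact this.symm
  refine ⟨μ, fun x => ?_⟩
  have h2 : Φ * V.ρ x = ∑ g : G, V.character g • V.ρ (g⁻¹ * x) := by
    rw [hΦdef, Finset.sum_mul]
    exact Finset.sum_congr rfl fun g _ => by rw [smul_mul_assoc, ← _root_.map_mul]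
  have h3 : Φ * V.ρ x = μ • V.ρ x := by rw [hΦ, smul_mul_assoc, one_mul]
  have := congrArg (LinearMap.trace ℂ V) (h2.symm.trans h3)
  simpa only [map_sum, _root_.map_smul, smul_eq_mul, FDRep.character] using this

/-- For a positive semidefinite Hermitian matrix `A`, the immanant `Imm_{χ^λ}(A)` with respect
to any irreducible character of `S_n` is a nonnegative real number (here expressed via the
partial order on `ℂ`: `0 ≤ z` iff `z` is a nonnegative real). -/
theorem immanant_nonneg_of_posSemidef (n : ℕ) (A : Matrix (Fin n) (Fin n) ℂ)
    (hA : A.PosSemidef) (V : FDRep ℂ (Equiv.Perm (Fin n)))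
    (hV : CategoryTheory.Simple V) :
    0 ≤ immanant (FDRep.character V) A := by
  classical
  set G := Equiv.Perm (Fin n)
  set χ : G → ℂ := V.character with hχ
  obtain ⟨μ, hμ⟩ := schur_conv V hV
  -- the character matrix
  set C : Matrix G G ℂ := Matrix.of fun σ τ => χ (σ * τ⁻¹) with hCdef
  -- dimension positivity
  have hfr : 0 < Module.finrank ℂ V := by
    rcases Nat.eq_zero_or_pos (Module.finrank ℂ V) with h0 | h
    · exfalso
      have hsub : Subsingleton V := (Module.finrank_zero_iff (R := ℂ) (M := V)).mp h0
      apply CategoryTheory.id_nonzero V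
      apply Action.hom_ext
      ext v; exact @Subsingleton.elim _ hsub _ _
    · exact h
  have hchi1 : χ 1 = (Module.finrank ℂ V : ℂ) := FDRep.char_one V
  -- μ is a positive real
  have hμd : μ * χ 1 = ∑ g : G, χ g * star (χ g) := by
    rw [← hμ 1]
    refine Finset.sum_congr rfl fun g _ => ?_
    rw [mul_one, ← char_inv_star]
  have hμpos : 0 < μ := by
    have hd : (0 : ℂ) < (Module.finrank ℂ V : ℂ) := by
      rw [show (0:ℂ) = ((0:ℕ):ℂ) by norm_num]
      exact_mod_cast Nat.cast_pos.mpr hfr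
    have hdne : (Module.finrank ℂ V : ℂ) ≠ 0 := hd.ne'
    have hS0 : (0 : ℂ) ≤ ∑ g : G, χ g * star (χ g) :=
      Finset.sum_nonneg fun g _ => mul_star_self_nonneg (χ g)
    have h1 : χ 1 * star (χ 1) ≤ ∑ g : G, χ g * star (χ g) :=
      Finset.single_le_sum (fun g _ => mul_star_self_nonneg (χ g)) (Finset.mem_univ 1)
    have hμf : μ = (∑ g : G, χ g * star (χ g)) * (Module.finrank ℂ V : ℂ)⁻¹ := by
      rw [← hμd, hchi1, mul_assoc, mul_inv_cancel₀ hdne, mul_one]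
    have hinvnn : (0:ℂ) ≤ (Module.finrank ℂ V : ℂ)⁻¹ := by
      have : ((Module.finrank ℂ V : ℂ))⁻¹ = ((((Module.finrank ℂ V : ℝ))⁻¹ : ℝ) : ℂ) := by
        push_cast
        ring
      rw [this]
      rw [Complex.zero_le_real]
      positivity
    have hμnn : 0 ≤ μ := by rw [hμf]; exact mul_nonneg hS0 hinvnn
    have hμne : μ ≠ 0 := by
      intro h0
      rw [h0, zero_mul] at hμd
      rw [hchi1] at h1
      have hlt : (0:ℂ) < (Module.finrank ℂ V : ℂ) * star ((Module.finrank ℂ V : ℂ)) := by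
        have : star ((Module.finrank ℂ V : ℂ)) = (Module.finrank ℂ V : ℂ) := by
          simp
        rw [this]
        exact mul_pos hd hd
      rw [← hμd] at h1
      exact absurd (lt_of_lt_of_le hlt h1) (lt_irrefl 0)
    exact lt_of_le_of_ne hμnn (Ne.symm hμne)
  have hμre : 0 < μ.re ∧ μ.im = 0 := by
    rw [Complex.lt_def] at hμpos
    exact ⟨by simpa using hμpos.1, by simpa using hμpos.2.symm⟩
  have hμeq : μ = (μ.re : ℂ) := by
    rw [Complex.ext_iff]; simp [hμre.2]
  -- C satisfies Cᴴ * C = μ • C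
  have hCC : Cᴴ * C = μ • C := by
    ext σ τ
    simp only [Matrix.mul_apply, Matrix.conjTranspose_apply, Matrix.smul_apply, hCdef,
      Matrix.of_apply, smul_eq_mul]
    have : ∀ ρ : G, star (χ (ρ * σ⁻¹)) * χ (ρ * τ⁻¹) = χ (σ * ρ⁻¹) * χ (ρ * τ⁻¹) := by
      intro ρ
      rw [← char_inv_star V (ρ * σ⁻¹)]
      congr 2
    simp_rw [this]
    rw [← hμ (σ * τ⁻¹)]
    refine Fintype.sum_equiv ((Equiv.inv G).trans (Equiv.mulLeft σ)) _ _ fun g => ?_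
    simp only [Equiv.trans_apply, Equiv.inv_apply, Equiv.coe_mulLeft]
    congr 2 <;> group
  -- square root scaling
  set s : ℝ := (Real.sqrt μ.re)⁻¹ with hsdef
  set P : Matrix G G ℂ := (s : ℂ) • C with hPdef
  have hPP : Pᴴ * P = C := by
    rw [hPdef, Matrix.conjTranspose_smul, Matrix.smul_mul, Matrix.mul_smul, hCC]
    rw [smul_smul, smul_smul]
    have hstar : star ((s:ℂ)) = (s:ℂ) := by simp [Complex.conj_ofReal]
    rw [hstar]
    have : (s:ℂ) * (s:ℂ) * μ = 1 := by
      rw [hμeq]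
      have : (s:ℂ) * (s:ℂ) * (μ.re:ℂ) = ((s * (s * μ.re) : ℝ) : ℂ) := by push_cast; ring
      rw [this, hsdef]
      rw [show (Real.sqrt μ.re)⁻¹ * ((Real.sqrt μ.re)⁻¹ * μ.re) = (Real.sqrt μ.re * Real.sqrt μ.re)⁻¹ * μ.re by ring]
      rw [Real.mul_self_sqrt hμre.1.le]
      rw [inv_mul_cancel₀ hμre.1.ne']
      norm_num
    rw [this, one_smul]
  -- the product matrix
  obtain ⟨B, hB⟩ : ∃ B : Matrix (Fin n) (Fin n) ℂ, A = Bᴴ * B := by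
    open scoped MatrixOrder in exact CStarAlgebra.nonneg_iff_eq_star_mul_self.mp hA.nonneg
  set N : Matrix (Fin n → Fin n) G ℂ := Matrix.of fun f σ => ∏ i, B (f i) (σ i) with hNdef
  have hM : ∀ σ τ : G, (Nᴴ * N) σ τ = ∏ i, A (σ i) (τ i) := by
    intro σ τ
    have : ∀ i : Fin n, A (σ i) (τ i) = ∑ k, star (B k (σ i)) * B k (τ i) := by
      intro i
      rw [hB]
      simp [Matrix.mul_apply, Matrix.conjTranspose_apply]
    simp_rw [this]
    rw [Finset.prod_univ_sum, Fintype.piFinset_univ]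
    simp only [Matrix.mul_apply, Matrix.conjTranspose_apply, hNdef, Matrix.of_apply]
    refine Finset.sum_congr rfl fun f _ => ?_
    rw [star_prod, ← Finset.prod_mul_distrib]
  -- column sums give the immanant
  have hsum : ∀ τ : G, ∑ σ : G, C σ τ * (Nᴴ * N) σ τ = immanant χ A := by
    intro τ
    simp_rw [hM]
    show _ = ∑ σ' : G, χ σ' * ∏ i, A (σ' i) i
    refine Fintype.sum_equiv (Equiv.mulRight τ⁻¹) _ _ fun σ => ?_
    simp only [Equiv.coe_mulRight, hCdef, Matrix.of_apply]
    congr 1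
    refine (Finset.prod_congr rfl fun i _ => ?_).trans
      (Equiv.prod_comp (τ : Equiv.Perm (Fin n)) fun j => A ((σ * τ⁻¹) j) j)
    rw [Equiv.Perm.mul_apply, show τ⁻¹ (τ i) = i from Equiv.symm_apply_apply τ i]
  have htot : ∑ σ : G, ∑ τ : G, C σ τ * (Nᴴ * N) σ τ
      = (Fintype.card G : ℂ) * immanant χ A := by
    rw [Finset.sum_comm]
    calc ∑ τ : G, ∑ σ : G, C σ τ * (Nᴴ * N) σ τ = ∑ _τ : G, immanant χ A :=
          Finset.sum_congr rfl fun τ _ => hsum τ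
    _ = (Fintype.card G : ℂ) * immanant χ A := by
          rw [Finset.sum_const, nsmul_eq_mul, Finset.card_univ]
  have hkey := key_nonneg P N
  rw [hPP, htot] at hkey
  have hcpos : (0:ℂ) < (Fintype.card G : ℂ) := by
    rw [show (0:ℂ) = ((0:ℕ):ℂ) by norm_num]
    exact_mod_cast Nat.cast_pos.mpr Fintype.card_pos
  have hcinv : (0:ℂ) ≤ ((Fintype.card G : ℂ))⁻¹ := by
    have : ((Fintype.card G : ℂ))⁻¹ = ((((Fintype.card G : ℝ))⁻¹ : ℝ) : ℂ) := by
      push_cast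
      ring
    rw [this, Complex.zero_le_real]
    positivity
  have : immanant χ A = ((Fintype.card G : ℂ))⁻¹ * ((Fintype.card G : ℂ) * immanant χ A) := by
    rw [← mul_assoc, inv_mul_cancel₀ hcpos.ne', one_mul]
  rw [hχ] at this
  rw [this]
  exact mul_nonneg hcinv (hχ ▸ hkey)
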